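/- The affine Orlik–Solomon algebra of the cone cG = {0} ⊕ G with base point 0 is isomorphic to the ordinary Orlik–Solomon algebra of G: A_d(cG) ≅ A(G). -/

import Mathlib

open ExteriorAlgebra

variable (K : Type*) [Field K] {n : ℕ}

/-- The generator `e i` of the exterior algebra `E = Λ(e_1,…,e_n)`. -/
noncomputable def gen (i : Fin n) : ExteriorAlgebra K (Fin n → K) :=
  ι K (Pi.single i 1)

/-- The monomial `e_S = e_{i_1} ∧ ⋯ ∧ e_{i_p}` for a tuple `S` given as a list. -/
noncomputable def eS (l : List (Fin n)) : ExteriorAlgebra K (Fin n → K) :=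
  (l.map (gen K)).prod

/-- `D` is the boundary map `∂`: it is linear and satisfies
`∂(e_{i_1} ∧ ⋯ ∧ e_{i_p}) = ∑ k (-1)^{k-1} e_{i_1} ∧ ⋯ ∧ ê_{i_k} ∧ ⋯ ∧ e_{i_p}`
(indexing the sum from `0`, the sign of the `k`-th term is `(-1)^k`). -/
def IsBoundary (D : ExteriorAlgebra K (Fin n → K) →ₗ[K] ExteriorAlgebra K (Fin n → K)) :
    Prop :=
  ∀ l : List (Fin n),
    D (eS K l) = ∑ k : Fin l.length, ((-1 : K) ^ (k : ℕ)) • eS K (l.eraseIdx k)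

/-- A circuit of a matroid: a minimal dependent set. -/
def IsCircuit {α : Type*} (M : Matroid α) (C : Set α) : Prop :=
  M.Dep C ∧ ∀ C' ⊂ C, ¬ M.Dep C'

/-- A simple matroid: every subset with at most two elements is independent
(no loops and no parallel points). -/
def MatroidSimple {α : Type*} (M : Matroid α) : Prop :=
  ∀ i j : α, M.Indep {i, j}

/-- The Orlik–Solomon ideal `I` of a matroid `G`: the ideal of the exterior algebra
generated by the boundaries `∂ e_S` of dependent tuples `S`. -/
noncomputable def OSIdeal (M : Matroid (Fin n))
    (D : ExteriorAlgebra K (Fin n → K) →ₗ[K] ExteriorAlgebra K (Fin n → K)) :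
    TwoSidedIdeal (ExteriorAlgebra K (Fin n → K)) :=
  TwoSidedIdeal.span
    {x | ∃ l : List (Fin n), l.Nodup ∧ M.Dep {i | i ∈ l} ∧ x = D (eS K l)}

/-- The defining relation of the Orlik–Solomon algebra `A(G) = E/I`:
each generator `∂ e_S` (`S` dependent) is set to zero. -/
def OSRel (M : Matroid (Fin n))
    (D : ExteriorAlgebra K (Fin n → K) →ₗ[K] ExteriorAlgebra K (Fin n → K)) :
    ExteriorAlgebra K (Fin n → K) → ExteriorAlgebra K (Fin n → K) → Prop :=
  fun x y => y = 0 ∧ ∃ l : List (Fin n), l.Nodup ∧ M.Dep {i | i ∈ l} ∧ x = D (eS K l)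

/-- The Orlik–Solomon algebra `A(G) = E/I`. -/
noncomputable abbrev OSAlgebra (M : Matroid (Fin n))
    (D : ExteriorAlgebra K (Fin n → K) →ₗ[K] ExteriorAlgebra K (Fin n → K)) :=
  RingQuot (OSRel K M D)

/-- The image `a_i` of the generator `e_i` in the Orlik–Solomon algebra. -/
noncomputable def aGen (M : Matroid (Fin n))
    (D : ExteriorAlgebra K (Fin n → K) →ₗ[K] ExteriorAlgebra K (Fin n → K))
    (i : Fin n) : OSAlgebra K M D :=
  RingQuot.mkAlgHom K (OSRel K M D) (gen K i)

-- list lemmas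
theorem myEraseIdx_eraseIdx {α : Type*} (L : List α) (i j : ℕ) (h : j ≤ i) :
    (L.eraseIdx (i+1)).eraseIdx j = (L.eraseIdx j).eraseIdx i := by
  induction L generalizing i j with
  | nil => simp
  | cons a t ih =>
    cases j with
    | zero => simp
    | succ j' =>
      cases i with
      | zero => omega
      | succ i' =>
        simp only [List.eraseIdx_cons_succ, List.cons.injEq, true_and]
        exact ih i' j' (by omega)

theorem myEraseIdx_map {α β : Type*} (f : α → β) (l : List α) (k : ℕ) :
    (l.map f).eraseIdx k = (l.eraseIdx k).map f := by
  induction l generalizing k with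
  | nil => simp
  | cons a t ih =>
    cases k with
    | zero => simp
    | succ k' => simp [ih]

theorem eS_cons (a : Fin n) (l : List (Fin n)) : eS K (a :: l) = gen K a * eS K l := by
  simp [eS]

theorem gen_mul_self (a : Fin n) : gen K a * gen K a = 0 := ι_sq_zero _

theorem gen_anticomm (a b : Fin n) : gen K a * gen K b = - (gen K b * gen K a) := by
  have h := ι_sq_zero (R := K) (M := Fin n → K) (Pi.single a 1 + Pi.single b 1)
  rw [map_add, add_mul, mul_add, mul_add, ι_sq_zero, ι_sq_zero, zero_add, add_zero] at h
  exact eq_neg_of_add_eq_zero_left h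

theorem gen_mul_eS_of_mem {a : Fin n} {l : List (Fin n)} (h : a ∈ l) :
    gen K a * eS K l = 0 := by
  induction l with
  | nil => simp at h
  | cons b t ih =>
    rw [eS_cons, ← mul_assoc]
    rcases List.mem_cons.mp h with rfl | h
    · rw [gen_mul_self, zero_mul]
    · rw [gen_anticomm, neg_mul, mul_assoc, ih h, mul_zero, neg_zero]

theorem boundary_range {D : ExteriorAlgebra K (Fin n → K) →ₗ[K] ExteriorAlgebra K (Fin n → K)}
    (hD : IsBoundary K D) (l : List (Fin n)) :
    D (eS K l) = ∑ k ∈ Finset.range l.length, ((-1 : K) ^ k) • eS K (l.eraseIdx k) := by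
  rw [hD l]
  exact Fin.sum_univ_eq_sum_range (fun k => ((-1 : K) ^ k) • eS K (l.eraseIdx k)) l.length

theorem D_cons {D : ExteriorAlgebra K (Fin n → K) →ₗ[K] ExteriorAlgebra K (Fin n → K)}
    (hD : IsBoundary K D) (a : Fin n) (l : List (Fin n)) :
    D (eS K (a :: l)) = eS K l - gen K a * D (eS K l) := by
  rw [boundary_range K hD, List.length_cons, Finset.sum_range_succ']
  simp only [List.eraseIdx_cons_succ, List.eraseIdx_cons_zero, pow_zero, one_smul,
    pow_succ, eS_cons]
  rw [boundary_range K hD, Finset.mul_sum]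
  rw [add_comm, sub_eq_add_neg, ← Finset.sum_neg_distrib]
  congr 1
  apply Finset.sum_congr rfl
  intro k _
  rw [mul_smul_comm]
  module


theorem eS_eq_gen_mul_D {D : ExteriorAlgebra K (Fin n → K) →ₗ[K] ExteriorAlgebra K (Fin n → K)}
    (hD : IsBoundary K D) {a : Fin n} {l : List (Fin n)} (ha : a ∈ l) :
    eS K l = gen K a * D (eS K l) := by
  have h := D_cons K hD a l
  rw [show eS K (a :: l) = gen K a * eS K l by simp [eS], gen_mul_eS_of_mem K ha, map_zero] at h
  exact sub_eq_zero.mp h.symm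

theorem DD_eq_zero {D : ExteriorAlgebra K (Fin n → K) →ₗ[K] ExteriorAlgebra K (Fin n → K)}
    (hD : IsBoundary K D) (l : List (Fin n)) :
    D (D (eS K l)) = 0 := by
  set N := l.length with hN
  rw [boundary_range K hD l, map_sum]
  simp only [map_smul]
  have step : ∀ k ∈ Finset.range N, ((-1:K)^k) • D (eS K (l.eraseIdx k)) =
      ∑ j ∈ Finset.range (N-1), ((-1:K)^(k+j)) • eS K ((l.eraseIdx k).eraseIdx j) := by
    intro k hk
    simp only [Finset.mem_range] at hk
    have hlen : (l.eraseIdx k).length = N - 1 := by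
      rw [List.length_eraseIdx]
      simp [hk, hN]
      intro h; omega
    rw [boundary_range K hD, hlen, Finset.smul_sum]
    exact Finset.sum_congr rfl fun j _ => by rw [smul_smul, ← pow_add]
  rw [Finset.sum_congr rfl step, ← Finset.sum_product']
  rw [← Finset.sum_filter_add_sum_filter_not _ (fun p : ℕ × ℕ => p.2 < p.1)]
  have key : ∑ p ∈ (Finset.range N ×ˢ Finset.range (N-1)).filter (fun p => p.2 < p.1),
      ((-1:K) ^ (p.1 + p.2)) • eS K ((l.eraseIdx p.1).eraseIdx p.2)
      = ∑ p ∈ (Finset.range N ×ˢ Finset.range (N-1)).filter (fun p => ¬ p.2 < p.1),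
      (-(((-1:K) ^ (p.1 + p.2)) • eS K ((l.eraseIdx p.1).eraseIdx p.2))) := by
    apply Finset.sum_nbij' (fun p => (p.2, p.1 - 1)) (fun p => (p.2 + 1, p.1))
    · intro p hp
      simp only [Finset.mem_filter, Finset.mem_product, Finset.mem_range] at hp ⊢
      omega
    · intro p hp
      simp only [Finset.mem_filter, Finset.mem_product, Finset.mem_range] at hp ⊢
      omega
    · intro p hp
      simp only [Finset.mem_filter, Finset.mem_product, Finset.mem_range] at hp
      ext <;> simp <;> omega
    · intro p hp
      simp only [Finset.mem_filter, Finset.mem_product, Finset.mem_range] at hp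
      ext <;> simp <;> omega
    · intro p hp
      simp only [Finset.mem_filter, Finset.mem_product, Finset.mem_range] at hp
      have h1 : p.1 = (p.1 - 1) + 1 := by omega
      rw [show (l.eraseIdx p.1).eraseIdx p.2 = (l.eraseIdx ((p.1-1)+1)).eraseIdx p.2 by rw [← h1]]
      rw [myEraseIdx_eraseIdx l (p.1-1) p.2 (by omega)]
      rw [show p.1 + p.2 = (p.2 + (p.1 - 1)) + 1 by omega, pow_succ]
      simp [neg_smul]
  rw [key, Finset.sum_neg_distrib]
  exact neg_add_cancel _


section Quot
variable {M : Matroid (Fin n)}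
  {D : ExteriorAlgebra K (Fin n → K) →ₗ[K] ExteriorAlgebra K (Fin n → K)}

theorem mk_D_eS_eq_zero {l : List (Fin n)} (h1 : l.Nodup)
    (h2 : M.Dep {i | i ∈ l}) :
    RingQuot.mkAlgHom K (OSRel K M D) (D (eS K l)) = 0 := by
  have := RingQuot.mkAlgHom_rel (S := K) (s := OSRel K M D)
    (x := D (eS K l)) (y := 0) ⟨rfl, l, h1, h2, rfl⟩
  rwa [map_zero] at this

theorem mk_eS_eq_zero (hD : IsBoundary K D) {l : List (Fin n)} (h1 : l.Nodup)
    (h2 : M.Dep {i | i ∈ l}) :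
    RingQuot.mkAlgHom K (OSRel K M D) (eS K l) = 0 := by
  obtain ⟨a, ha⟩ : ∃ a, a ∈ l := by
    rcases l with _ | ⟨a, t⟩
    · exfalso
      have : ({i | i ∈ ([] : List (Fin n))} : Set (Fin n)) = ∅ := by ext i; simp
      rw [this] at h2
      exact h2.1 M.empty_indep
    · exact ⟨a, List.mem_cons_self⟩
  rw [eS_eq_gen_mul_D K hD ha, map_mul, mk_D_eS_eq_zero K h1 h2, mul_zero]

end Quot

-- the projection map
noncomputable def prmap : (Fin (n+1) → K) →ₗ[K] (Fin n → K) := LinearMap.funLeft K K Fin.succ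

theorem prmap_single_zero : prmap K (Pi.single (0 : Fin (n+1)) (1:K)) = 0 := by
  funext i
  simp only [prmap, LinearMap.funLeft_apply, Function.comp]
  exact Pi.single_eq_of_ne (Fin.succ_ne_zero i) 1

theorem prmap_single_succ (k : Fin n) :
    prmap K (Pi.single (Fin.succ k) (1:K)) = Pi.single k 1 := by
  funext i
  simp only [prmap, LinearMap.funLeft_apply, Function.comp]
  simp [Pi.single_apply, Fin.succ_inj]

noncomputable def psi (M : Matroid (Fin n))
    (D : ExteriorAlgebra K (Fin n → K) →ₗ[K] ExteriorAlgebra K (Fin n → K)) :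
    ExteriorAlgebra K (Fin (n+1) → K) →ₐ[K] OSAlgebra K M D :=
  ExteriorAlgebra.lift K ⟨(RingQuot.mkAlgHom K (OSRel K M D)).toLinearMap ∘ₗ (ι K) ∘ₗ prmap K, by
    intro m
    simp only [LinearMap.comp_apply, AlgHom.toLinearMap_apply]
    rw [← map_mul, ι_sq_zero, map_zero]⟩

variable {M : Matroid (Fin n)}
  {D : ExteriorAlgebra K (Fin n → K) →ₗ[K] ExteriorAlgebra K (Fin n → K)}

theorem psi_gen_zero : psi K M D (gen K 0) = 0 := by
  rw [gen, psi, lift_ι_apply]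
  simp [prmap_single_zero]

theorem psi_gen_succ (k : Fin n) :
    psi K M D (gen K (Fin.succ k)) = RingQuot.mkAlgHom K (OSRel K M D) (gen K k) := by
  rw [gen, psi, lift_ι_apply]
  simp [prmap_single_succ, gen]

theorem psi_eS (m : List (Fin (n+1))) :
    psi K M D (eS K m) = (m.map (fun i => psi K M D (gen K i))).prod := by
  rw [eS, map_list_prod, List.map_map]
  rfl

theorem psi_eS_of_mem_zero {m : List (Fin (n+1))} (h : (0 : Fin (n+1)) ∈ m) :
    psi K M D (eS K m) = 0 := by
  rw [psi_eS]
  exact List.prod_eq_zero (List.mem_map.mpr ⟨0, h, psi_gen_zero K⟩)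

theorem psi_eS_map_succ (l : List (Fin n)) :
    psi K M D (eS K (l.map Fin.succ)) = RingQuot.mkAlgHom K (OSRel K M D) (eS K l) := by
  rw [psi_eS, List.map_map, eS, map_list_prod, List.map_map]
  congr 1
  apply List.map_congr_left
  intro a _
  exact psi_gen_succ K a

theorem exists_map_succ {l : List (Fin (n+1))} (h : (0 : Fin (n+1)) ∉ l) :
    ∃ l' : List (Fin n), l = l'.map Fin.succ := by
  induction l with
  | nil => exact ⟨[], rfl⟩
  | cons a t ih =>
    obtain ⟨t', rfl⟩ := ih (fun ht => h (List.mem_cons_of_mem _ ht))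
    have ha : a ≠ 0 := fun ha => h (ha ▸ List.mem_cons_self)
    obtain ⟨b, rfl⟩ := Fin.exists_succ_eq.mpr ha
    exact ⟨b :: t', rfl⟩

theorem succ_preimage_map (l : List (Fin n)) :
    Fin.succ ⁻¹' {i | i ∈ l.map Fin.succ} = {i | i ∈ l} := by
  ext i
  simp [Fin.succ_inj]

theorem dep_transfer {M : Matroid (Fin n)} (hE : M.E = Set.univ)
    {cM : Matroid (Fin (n+1))} (hcE : cM.E = Set.univ)
    (hcone : ∀ S : Set (Fin (n + 1)), cM.Indep S ↔ M.Indep (Fin.succ ⁻¹' S))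
    (S : Set (Fin (n+1))) : cM.Dep S ↔ M.Dep (Fin.succ ⁻¹' S) := by
  rw [Matroid.dep_iff, Matroid.dep_iff, hE, hcE, hcone]
  simp [Set.subset_univ]

theorem psi_kills_rel {M : Matroid (Fin n)}
    {D : ExteriorAlgebra K (Fin n → K) →ₗ[K] ExteriorAlgebra K (Fin n → K)}
    (hD : IsBoundary K D) (hE : M.E = Set.univ)
    {cM : Matroid (Fin (n+1))} (hcE : cM.E = Set.univ)
    (hcone : ∀ S : Set (Fin (n + 1)), cM.Indep S ↔ M.Indep (Fin.succ ⁻¹' S))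
    {Dc : ExteriorAlgebra K (Fin (n+1) → K) →ₗ[K] ExteriorAlgebra K (Fin (n+1) → K)}
    (hDc : IsBoundary K Dc)
    {l : List (Fin (n+1))} (h1 : l.Nodup) (h2 : cM.Dep {i | i ∈ l}) :
    psi K M D (Dc (eS K l)) = 0 := by
  rw [boundary_range K hDc, map_sum]
  simp only [map_smul]
  by_cases h0 : (0 : Fin (n+1)) ∈ l
  · -- case 0 ∈ l
    obtain ⟨j, hjlt, hj⟩ := List.mem_iff_getElem.mp h0
    rw [Finset.sum_eq_single_of_mem j (Finset.mem_range.mpr hjlt)]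
    · -- the remaining term is zero
      have hne : (0 : Fin (n+1)) ∉ l.eraseIdx j := by
        intro hmem
        obtain ⟨i, hi, hij, hget⟩ := List.mem_eraseIdx_iff_getElem.mp hmem
        have heq : (⟨i, hi⟩ : Fin l.length) = ⟨j, hjlt⟩ :=
          List.nodup_iff_injective_get.mp h1 (by simp [List.get_eq_getElem, hget, hj])
        exact hij (by simpa using congrArg Fin.val heq)
      obtain ⟨l'', hl''⟩ := exists_map_succ hne
      rw [hl'', psi_eS_map_succ, mk_eS_eq_zero K hD, smul_zero]
      · exact (List.Nodup.of_map _ (hl'' ▸ (List.eraseIdx_sublist l j).nodup h1))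
      · -- M.Dep {i | i ∈ l''}
        have hset : {i : Fin n | i ∈ l''} = Fin.succ ⁻¹' {i | i ∈ l} := by
          ext x
          simp only [Set.mem_setOf_eq, Set.mem_preimage]
          constructor
          · intro hx
            have : x.succ ∈ l.eraseIdx j := by rw [hl'']; exact List.mem_map_of_mem hx
            exact (List.eraseIdx_sublist l j).mem this
          · intro hx
            obtain ⟨i, hi, hget⟩ := List.mem_iff_getElem.mp hx
            have hij : i ≠ j := by
              intro hij; subst hij
              exact Fin.succ_ne_zero x (by rw [← hget, hj])
            have : x.succ ∈ l.eraseIdx j :=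
              List.mem_eraseIdx_iff_getElem.mpr ⟨i, hi, hij, hget⟩
            rw [hl''] at this
            obtain ⟨y, hy, hyx⟩ := List.mem_map.mp this
            rwa [← Fin.succ_inj.mp hyx]
        rw [hset]
        exact (dep_transfer hE hcE hcone _).mp h2
    · -- other terms are zero
      intro k hk hkj
      have : (0 : Fin (n+1)) ∈ l.eraseIdx k :=
        List.mem_eraseIdx_iff_getElem.mpr ⟨j, hjlt, fun h => hkj h.symm, hj⟩
      rw [psi_eS_of_mem_zero K this, smul_zero]
  · -- case 0 ∉ l
    obtain ⟨l', rfl⟩ := exists_map_succ h0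
    have hlen : (l'.map Fin.succ).length = l'.length := List.length_map _
    rw [hlen]
    have : ∀ k ∈ Finset.range l'.length,
        ((-1:K)^k) • psi K M D (eS K ((l'.map Fin.succ).eraseIdx k))
        = ((-1:K)^k) • RingQuot.mkAlgHom K (OSRel K M D) (eS K (l'.eraseIdx k)) := by
      intro k _
      rw [myEraseIdx_map, psi_eS_map_succ]
    rw [Finset.sum_congr rfl this]
    have : ∑ k ∈ Finset.range l'.length,
        ((-1:K)^k) • RingQuot.mkAlgHom K (OSRel K M D) (eS K (l'.eraseIdx k))
        = RingQuot.mkAlgHom K (OSRel K M D) (D (eS K l')) := by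
      rw [boundary_range K hD, map_sum]
      simp only [map_smul]
    rw [this]
    apply mk_D_eS_eq_zero K (List.Nodup.of_map _ h1)
    have := (dep_transfer hE hcE hcone _).mp h2
    rwa [succ_preimage_map] at this


-- the inclusion map
noncomputable def jmap : (Fin n → K) →ₗ[K] (Fin (n+1) → K) where
  toFun v := Fin.cons (-(∑ t, v t)) v
  map_add' u v := by
    funext i
    cases i using Fin.cases with
    | zero => simp [Finset.sum_add_distrib]; ring
    | succ j => simp
  map_smul' c v := by
    funext i
    cases i using Fin.cases with
    | zero => simp [Finset.mul_sum]
    | succ j => simp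

theorem jmap_single (k : Fin n) :
    jmap K (Pi.single k 1) = Pi.single (Fin.succ k) 1 - Pi.single (0 : Fin (n+1)) 1 := by
  funext i
  cases i using Fin.cases with
  | zero =>
    simp only [jmap, LinearMap.coe_mk, AddHom.coe_mk, Fin.cons_zero, Pi.sub_apply]
    rw [Pi.single_eq_of_ne (Fin.succ_ne_zero k).symm, Pi.single_eq_same]
    simp [Pi.single_apply]
  | succ j =>
    simp only [jmap, LinearMap.coe_mk, AddHom.coe_mk, Fin.cons_succ, Pi.sub_apply]
    rw [Pi.single_eq_of_ne (Fin.succ_ne_zero j), sub_zero]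
    simp [Pi.single_apply, Fin.succ_inj]

noncomputable def phi (cM : Matroid (Fin (n+1)))
    (Dc : ExteriorAlgebra K (Fin (n+1) → K) →ₗ[K] ExteriorAlgebra K (Fin (n+1) → K)) :
    ExteriorAlgebra K (Fin n → K) →ₐ[K] OSAlgebra K cM Dc :=
  ExteriorAlgebra.lift K ⟨(RingQuot.mkAlgHom K (OSRel K cM Dc)).toLinearMap ∘ₗ (ι K) ∘ₗ jmap K, by
    intro m
    simp only [LinearMap.comp_apply, AlgHom.toLinearMap_apply]
    rw [← map_mul, ι_sq_zero, map_zero]⟩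

variable {cM : Matroid (Fin (n+1))}
  {Dc : ExteriorAlgebra K (Fin (n+1) → K) →ₗ[K] ExteriorAlgebra K (Fin (n+1) → K)}

theorem phi_gen (k : Fin n) :
    phi K cM Dc (gen K k) = aGen K cM Dc (Fin.succ k) - aGen K cM Dc 0 := by
  rw [gen, phi, lift_ι_apply]
  simp only [LinearMap.comp_apply, AlgHom.toLinearMap_apply, jmap_single, map_sub]
  rfl

theorem prod_sub_eq (hDc : IsBoundary K Dc) (l : List (Fin n)) :
    (l.map (fun i => gen K (Fin.succ i) - gen K (0 : Fin (n+1)))).prod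
      = eS K (l.map Fin.succ) - gen K 0 * Dc (eS K (l.map Fin.succ)) := by
  induction l with
  | nil =>
    have h0 : Dc 1 = 0 := by
      have := boundary_range K hDc ([] : List (Fin (n+1)))
      simpa [eS] using this
    simp [eS, h0]
  | cons i t ih =>
    rw [List.map_cons, List.prod_cons, ih, List.map_cons]
    set a := gen K (Fin.succ i)
    set z := gen K (0 : Fin (n+1))
    set A := eS K (t.map Fin.succ)
    set B := Dc A
    have heS : eS K (Fin.succ i :: t.map Fin.succ) = a * A := by simp [eS, a, A]
    rw [D_cons K hDc, heS]
    have hz : z * z = 0 := gen_mul_self K 0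
    have hac : a * z = - (z * a) := gen_anticomm K _ _
    rw [sub_mul, mul_sub, mul_sub, mul_sub, ← mul_assoc z z B, hz, zero_mul, sub_zero,
      ← mul_assoc a z B, hac, neg_mul, mul_assoc]
    abel

theorem phi_eS (hDc : IsBoundary K Dc) (m : List (Fin n)) :
    phi K cM Dc (eS K m) = RingQuot.mkAlgHom K (OSRel K cM Dc)
      (eS K (m.map Fin.succ) - gen K 0 * Dc (eS K (m.map Fin.succ))) := by
  rw [← prod_sub_eq K hDc, eS, map_list_prod, map_list_prod, List.map_map, List.map_map]
  congr 1
  apply List.map_congr_left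
  intro a _
  show phi K cM Dc (gen K a) = RingQuot.mkAlgHom K (OSRel K cM Dc) (gen K (Fin.succ a) - gen K 0)
  rw [phi_gen, map_sub]
  rfl

theorem phi_kills_rel {M : Matroid (Fin n)}
    {D : ExteriorAlgebra K (Fin n → K) →ₗ[K] ExteriorAlgebra K (Fin n → K)}
    (hD : IsBoundary K D) (hE : M.E = Set.univ) (hcE : cM.E = Set.univ)
    (hcone : ∀ S : Set (Fin (n + 1)), cM.Indep S ↔ M.Indep (Fin.succ ⁻¹' S))
    (hDc : IsBoundary K Dc)
    {l : List (Fin n)} (h1 : l.Nodup) (h2 : M.Dep {i | i ∈ l}) :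
    phi K cM Dc (D (eS K l)) = 0 := by
  set L := l.map Fin.succ with hL
  have hlen : L.length = l.length := List.length_map _
  rw [boundary_range K hD, map_sum]
  have step : ∀ k ∈ Finset.range l.length,
      phi K cM Dc (((-1:K)^k) • eS K (l.eraseIdx k))
      = ((-1:K)^k) • RingQuot.mkAlgHom K (OSRel K cM Dc) (eS K (L.eraseIdx k))
        - ((-1:K)^k) • RingQuot.mkAlgHom K (OSRel K cM Dc)
            (gen K 0 * Dc (eS K (L.eraseIdx k))) := by
    intro k _
    rw [map_smul, phi_eS K hDc, ← myEraseIdx_map, ← hL, map_sub, smul_sub]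
  rw [Finset.sum_congr rfl step, Finset.sum_sub_distrib]
  have first : ∑ k ∈ Finset.range l.length,
      ((-1:K)^k) • RingQuot.mkAlgHom K (OSRel K cM Dc) (eS K (L.eraseIdx k)) = 0 := by
    have : ∑ k ∈ Finset.range l.length, ((-1:K)^k) • RingQuot.mkAlgHom K (OSRel K cM Dc) (eS K (L.eraseIdx k))
        = RingQuot.mkAlgHom K (OSRel K cM Dc) (Dc (eS K L)) := by
      rw [boundary_range K hDc, map_sum, hlen]
      simp only [map_smul]
    rw [this]
    have hnd : L.Nodup := by rw [hL]; exact h1.map (Fin.succ_injective n)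
    have hdep : cM.Dep {i | i ∈ L} := by
      rw [hL, dep_transfer hE hcE hcone, succ_preimage_map]
      exact h2
    exact mk_D_eS_eq_zero K hnd hdep
  have second : ∑ k ∈ Finset.range l.length,
      ((-1:K)^k) • RingQuot.mkAlgHom K (OSRel K cM Dc) (gen K 0 * Dc (eS K (L.eraseIdx k))) = 0 := by
    have : ∑ k ∈ Finset.range l.length,
        ((-1:K)^k) • RingQuot.mkAlgHom K (OSRel K cM Dc) (gen K 0 * Dc (eS K (L.eraseIdx k)))
        = RingQuot.mkAlgHom K (OSRel K cM Dc) (gen K 0 * Dc (Dc (eS K L))) := by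
      rw [boundary_range K hDc (l := L), hlen, map_sum, Finset.mul_sum, map_sum]
      apply Finset.sum_congr rfl
      intro k _
      rw [map_smul Dc, mul_smul_comm, map_smul]
    rw [this, DD_eq_zero K hDc, mul_zero, map_zero]
  rw [first, second, sub_zero]


/-- the affine Orlik–Solomon algebra of the cone `cG = {0} ⊕ G`
(the subalgebra of `A(cG)` generated by `a_1 − a_0, …, a_n − a_0`) is isomorphic to
the ordinary Orlik–Solomon algebra `A(G)`.  Here `cG` is characterized by:
a set is independent in `cG` iff the part away from the new isthmus `0` is
independent in `G`. -/
theorem affine_OS_of_cone (M : Matroid (Fin n)) (hE : M.E = Set.univ)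
    (hsimple : MatroidSimple M)
    (cM : Matroid (Fin (n + 1))) (hcE : cM.E = Set.univ)
    (hcone : ∀ S : Set (Fin (n + 1)), cM.Indep S ↔ M.Indep (Fin.succ ⁻¹' S))
    (D : ExteriorAlgebra K (Fin n → K) →ₗ[K] ExteriorAlgebra K (Fin n → K))
    (hD : IsBoundary K D)
    (Dc : ExteriorAlgebra K (Fin (n + 1) → K) →ₗ[K] ExteriorAlgebra K (Fin (n + 1) → K))
    (hDc : IsBoundary K Dc) :
    Nonempty
      ((Algebra.adjoin K
          {x | ∃ k : Fin n, x = aGen K cM Dc k.succ - aGen K cM Dc 0}) ≃ₐ[K]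
        OSAlgebra K M D) := by
  classical
  obtain ⟨Ψ, hΨ⟩ : ∃ Ψ : OSAlgebra K cM Dc →ₐ[K] OSAlgebra K M D,
      ∀ x, Ψ (RingQuot.mkAlgHom K (OSRel K cM Dc) x) = psi K M D x := by
    refine ⟨RingQuot.liftAlgHom K ⟨psi K M D, ?_⟩,
      fun x => RingQuot.liftAlgHom_mkAlgHom_apply _ _ _ _⟩
    rintro x y ⟨rfl, l, h1, h2, rfl⟩
    rw [map_zero]
    exact psi_kills_rel K hD hE hcE hcone hDc h1 h2
  obtain ⟨Φ, hΦ⟩ : ∃ Φ : OSAlgebra K M D →ₐ[K] OSAlgebra K cM Dc,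
      ∀ x, Φ (RingQuot.mkAlgHom K (OSRel K M D) x) = phi K cM Dc x := by
    refine ⟨RingQuot.liftAlgHom K ⟨phi K cM Dc, ?_⟩,
      fun x => RingQuot.liftAlgHom_mkAlgHom_apply _ _ _ _⟩
    rintro x y ⟨rfl, l, h1, h2, rfl⟩
    rw [map_zero]
    exact phi_kills_rel K hD hE hcE hcone hDc h1 h2
  set T := Algebra.adjoin K
      {x | ∃ k : Fin n, x = aGen K cM Dc k.succ - aGen K cM Dc 0} with hT
  have hΨgen : ∀ k : Fin n,
      Ψ (aGen K cM Dc (Fin.succ k) - aGen K cM Dc 0) = aGen K M D k := by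
    intro k
    rw [map_sub, aGen, aGen, hΨ, hΨ, psi_gen_succ, psi_gen_zero, sub_zero, aGen]
  have hΦgen : ∀ k : Fin n,
      Φ (aGen K M D k) = aGen K cM Dc (Fin.succ k) - aGen K cM Dc 0 := by
    intro k
    rw [aGen, hΦ, phi_gen]
  have hι : ∀ v : Fin n → K, ι K (M := Fin n → K) v = ∑ k, v k • gen K k := by
    intro v
    conv_lhs => rw [← Finset.univ_sum_single v]
    rw [map_sum]
    refine Finset.sum_congr rfl fun k _ => ?_
    rw [show Pi.single k (v k) = v k • (Pi.single k 1 : Fin n → K) by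
      funext j; by_cases h : j = k <;> simp [Pi.single_apply, h], map_smul, gen]
  have hsurj : Function.Surjective (Ψ.comp T.val) := by
    intro y
    obtain ⟨x, rfl⟩ := RingQuot.mkAlgHom_surjective K (OSRel K M D) y
    suffices h : RingQuot.mkAlgHom K (OSRel K M D) x ∈ (Ψ.comp T.val).range by
      obtain ⟨t, ht⟩ := h
      exact ⟨t, ht⟩
    induction x using ExteriorAlgebra.induction with
    | algebraMap r =>
      rw [AlgHom.commutes]
      exact Subalgebra.algebraMap_mem _ r
    | ι v =>
      rw [hι v, map_sum]
      apply Subalgebra.sum_mem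
      intro k _
      rw [map_smul]
      apply Subalgebra.smul_mem
      exact ⟨⟨aGen K cM Dc (Fin.succ k) - aGen K cM Dc 0,
        Algebra.subset_adjoin ⟨k, rfl⟩⟩, hΨgen k⟩
    | mul a b ha hb => rw [map_mul]; exact Subalgebra.mul_mem _ ha hb
    | add a b ha hb => rw [map_add]; exact Subalgebra.add_mem _ ha hb
  have hkey : ∀ x (hx : x ∈ T), Φ (Ψ x) = x := by
    intro x hx
    induction hx using Algebra.adjoin_induction with
    | mem x hx =>
      obtain ⟨k, rfl⟩ := hx
      rw [hΨgen k, hΦgen k]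
    | algebraMap r => rw [AlgHom.commutes, AlgHom.commutes]
    | add x y hx hy ihx ihy => rw [map_add, map_add, ihx, ihy]
    | mul x y hx hy ihx ihy => rw [map_mul, map_mul, ihx, ihy]
  have hinj : Function.Injective (Ψ.comp T.val) := by
    intro a b hab
    have h2 : Φ (Ψ (a : OSAlgebra K cM Dc)) = Φ (Ψ (b : OSAlgebra K cM Dc)) := by
      exact congrArg Φ hab
    rw [hkey _ a.2, hkey _ b.2] at h2
    exact Subtype.ext h2
  exact ⟨AlgEquiv.ofBijective (Ψ.comp T.val) ⟨hinj, hsurj⟩⟩
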